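/- Let n ∈ ℕ, let B be a geometric structure on E := EuclideanSpace ℝ (Fin n), and let F, G : E → ℝ be differentiable functions. Let gF be a left-gradient field of F with respect to B, and let gG be a C¹, compactly supported left-gradient field of G with respect to B. Assume F is bounded and the integrands below are integrable with respect to Lebesgue measure (volume). Then ∫ F x * trace(fderiv ℝ gG x) dx = − ∫ B x (gF x) (gG x) dx; that is, ∫ F · Δ^L_B G dvol = − ∫ {F, G}_B dvol (Green's identity on the boundaryless manifold ℝⁿ). -/

import Mathlib

open MeasureTheory

lemma trace_eq_sum_eucl {n : ℕ} (A : EuclideanSpace ℝ (Fin n) →L[ℝ] EuclideanSpace ℝ (Fin n)) :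
    LinearMap.trace ℝ (EuclideanSpace ℝ (Fin n)) A.toLinearMap
      = ∑ i, A (EuclideanSpace.single i 1) i := by
  rw [LinearMap.trace_eq_matrix_trace ℝ (EuclideanSpace.basisFun (Fin n) ℝ).toBasis]
  simp [Matrix.trace, Matrix.diag, LinearMap.toMatrix_apply,
    EuclideanSpace.basisFun_apply, EuclideanSpace.basisFun_repr]

lemma flat_div_zero {m : ℕ} (f : (Fin (m+1) → ℝ) → (Fin (m+1) → ℝ))
    (hf : Differentiable ℝ f) (hsupp : HasCompactSupport f)
    (hint : Integrable (fun x => ∑ i, fderiv ℝ f x (Pi.single i 1) i)) :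
    ∫ x, ∑ i, fderiv ℝ f x (Pi.single i 1) i = 0 := by
  obtain ⟨R, hR⟩ := hsupp.isBounded.subset_closedBall 0
  have hout : ∀ x : Fin (m+1) → ℝ, R < ‖x‖ → fderiv ℝ f x = 0 := by
    intro x hx
    have hx' : x ∈ (tsupport f)ᶜ := by
      intro h
      exact absurd (mem_closedBall_zero_iff.mp (hR h)) (not_le.mpr hx)
    have : f =ᶠ[nhds x] (fun _ => 0) := by
      filter_upwards [(isClosed_tsupport f).isOpen_compl.mem_nhds hx'] with y hy
      exact image_eq_zero_of_notMem_tsupport hy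
    rw [this.fderiv_eq, fderiv_fun_const]
    rfl
  set R' : ℝ := max R 0 + 1 with hR'
  have hRR' : R < R' := by
    have : R ≤ max R 0 := le_max_left _ _
    linarith
  set a : Fin (m+1) → ℝ := fun _ => -R' with ha
  set b : Fin (m+1) → ℝ := fun _ => R' with hb
  have hle : a ≤ b := by
    intro i; simp only [ha, hb]
    have : (0:ℝ) ≤ max R 0 := le_max_right _ _
    linarith
  have key := MeasureTheory.integral_divergence_of_hasFDerivAt_off_countable a b hle f
    (fderiv ℝ f) ∅ Set.countable_empty hf.continuous.continuousOn
    (fun x _ => (hf x).hasFDerivAt) hint.integrableOn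
  have hface : ∀ (i : Fin (m+1)) (c : ℝ), |c| = R' → ∀ y : Fin m → ℝ,
      f (Fin.insertNth i c y) i = 0 := by
    intro i c hc y
    have h1 : R < ‖(Fin.insertNth i c y : Fin (m+1) → ℝ)‖ := by
      have := norm_le_pi_norm (Fin.insertNth i c y : Fin (m+1) → ℝ) i
      rw [Fin.insertNth_apply_same] at this
      simp only [Real.norm_eq_abs] at this
      linarith [hc ▸ this]
    have hx' : Fin.insertNth i c y ∉ tsupport f := by
      intro h
      exact absurd (mem_closedBall_zero_iff.mp (hR h)) (not_le.mpr h1)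
    rw [image_eq_zero_of_notMem_tsupport hx']
    rfl
  rw [Finset.sum_eq_zero] at key
  · rw [← key]
    apply (setIntegral_eq_integral_of_forall_compl_eq_zero ?_).symm
    intro x hx
    have : R < ‖x‖ := by
      have hex : ∃ i, R' ≤ |x i| := by
        rw [Set.mem_Icc, not_and_or] at hx
        rcases hx with hx | hx
        · rw [Pi.le_def, not_forall] at hx
          obtain ⟨i, hi⟩ := hx
          simp only [ha, not_le] at hi
          exact ⟨i, le_abs.mpr (Or.inr (by linarith))⟩
        · rw [Pi.le_def, not_forall] at hx
          obtain ⟨i, hi⟩ := hx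
          simp only [hb, not_le] at hi
          exact ⟨i, le_abs.mpr (Or.inl hi.le)⟩
      obtain ⟨i, hi⟩ := hex
      have h2 := norm_le_pi_norm x i
      simp only [Real.norm_eq_abs] at h2
      linarith
    rw [Finset.sum_eq_zero]
    intro i _
    rw [hout x this]
    rfl
  · intro i _
    rw [setIntegral_eq_zero_of_forall_eq_zero, setIntegral_eq_zero_of_forall_eq_zero, sub_zero]
    · intro y _; exact hface i (-R') (by rw [abs_neg, abs_of_nonneg (by positivity)]) y
    · intro y _; exact hface i R' (by rw [abs_of_nonneg (by positivity)]) y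

lemma eucl_div_zero {n : ℕ} (f : EuclideanSpace ℝ (Fin n) → EuclideanSpace ℝ (Fin n))
    (hf : Differentiable ℝ f) (hsupp : HasCompactSupport f)
    (hint : Integrable (fun x =>
      LinearMap.trace ℝ (EuclideanSpace ℝ (Fin n)) (fderiv ℝ f x).toLinearMap)) :
    ∫ x, LinearMap.trace ℝ (EuclideanSpace ℝ (Fin n)) (fderiv ℝ f x).toLinearMap = 0 := by
  cases n with
  | zero =>
    have : ∀ x, LinearMap.trace ℝ (EuclideanSpace ℝ (Fin 0)) (fderiv ℝ f x).toLinearMap = 0 := by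
      intro x
      have : (fderiv ℝ f x).toLinearMap = 0 := Subsingleton.elim _ _
      rw [this, map_zero]
    simp only [this, integral_zero]
  | succ m =>
    set eL : EuclideanSpace ℝ (Fin (m+1)) ≃L[ℝ] (Fin (m+1) → ℝ) :=
      (EuclideanSpace.equiv (Fin (m+1)) ℝ) with heL
    set g : (Fin (m+1) → ℝ) → (Fin (m+1) → ℝ) := fun y => eL (f (eL.symm y)) with hg
    have hfd : ∀ y, HasFDerivAt g
        (((eL : EuclideanSpace ℝ (Fin (m+1)) →L[ℝ] (Fin (m+1) → ℝ))).comp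
          ((fderiv ℝ f (eL.symm y)).comp
            (eL.symm : (Fin (m+1) → ℝ) →L[ℝ] EuclideanSpace ℝ (Fin (m+1))))) y := by
      intro y
      exact (eL.toContinuousLinearMap.hasFDerivAt.comp _
        (((hf (eL.symm y)).hasFDerivAt).comp y eL.symm.toContinuousLinearMap.hasFDerivAt))
    have hdivg : ∀ y, (∑ i, fderiv ℝ g y (Pi.single i 1) i) =
        LinearMap.trace ℝ (EuclideanSpace ℝ (Fin (m+1))) (fderiv ℝ f (eL.symm y)).toLinearMap := by
      intro y
      rw [(hfd y).fderiv, trace_eq_sum_eucl]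
      rfl
    have hgdiff : Differentiable ℝ g := fun y => (hfd y).differentiableAt
    have hgsupp : HasCompactSupport g := by
      have h1 : HasCompactSupport (f ∘ eL.symm) :=
        hsupp.comp_homeomorph eL.symm.toHomeomorph
      exact h1.comp_left (map_zero eL)
    have hmp : MeasurePreserving (eL.symm : (Fin (m+1) → ℝ) → EuclideanSpace ℝ (Fin (m+1)))
        volume volume := by
      have := (EuclideanSpace.volume_preserving_symm_measurableEquiv_toLp (Fin (m+1))).symm
      exact this
    have hgint : Integrable (fun y => ∑ i, fderiv ℝ g y (Pi.single i 1) i) := by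
      simp only [hdivg]
      exact (hmp.integrable_comp hint.aestronglyMeasurable).mpr hint
    have hzero := flat_div_zero g hgdiff hgsupp hgint
    calc ∫ x, LinearMap.trace ℝ (EuclideanSpace ℝ (Fin (m+1))) (fderiv ℝ f x).toLinearMap
        = ∫ y, LinearMap.trace ℝ (EuclideanSpace ℝ (Fin (m+1)))
            (fderiv ℝ f (eL.symm y)).toLinearMap := by
          exact (hmp.integral_comp (MeasurableEquiv.toLp 2
            (Fin (m+1) → ℝ)).measurableEmbedding _).symm
      _ = ∫ y, ∑ i, fderiv ℝ g y (Pi.single i 1) i := by simp only [hdivg]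
      _ = 0 := hzero

/-- Green's identity on the boundaryless manifold `ℝⁿ`:
`∫ F · Δ^L_B G dvol = − ∫ {F, G}_B dvol`. -/
theorem green_identity_euclidean {n : ℕ}
    (B : EuclideanSpace ℝ (Fin n) →
      (EuclideanSpace ℝ (Fin n) →ₗ[ℝ] EuclideanSpace ℝ (Fin n) →ₗ[ℝ] ℝ))
    (hB1 : ∀ x v, (∀ w, B x v w = 0) → v = 0)
    (hB2 : ∀ x w, (∀ v, B x v w = 0) → w = 0)
    (F G : EuclideanSpace ℝ (Fin n) → ℝ)
    (hF : Differentiable ℝ F) (hG : Differentiable ℝ G)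
    (gF gG : EuclideanSpace ℝ (Fin n) → EuclideanSpace ℝ (Fin n))
    (hgFgrad : ∀ x w, B x (gF x) w = fderiv ℝ F x w)
    (hgGgrad : ∀ x w, B x (gG x) w = fderiv ℝ G x w)
    (hgG : ContDiff ℝ 1 gG) (hgGsupp : HasCompactSupport gG)
    (hFbd : ∃ C, ∀ x, |F x| ≤ C)
    (hint1 : Integrable (fun x => F x *
      LinearMap.trace ℝ (EuclideanSpace ℝ (Fin n)) (fderiv ℝ gG x).toLinearMap))
    (hint2 : Integrable (fun x => B x (gF x) (gG x))) :
    ∫ x, F x * LinearMap.trace ℝ (EuclideanSpace ℝ (Fin n)) (fderiv ℝ gG x).toLinearMap =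
      - ∫ x, B x (gF x) (gG x) := by

  have hgGd : Differentiable ℝ gG := hgG.differentiable one_ne_zero
  set f : EuclideanSpace ℝ (Fin n) → EuclideanSpace ℝ (Fin n) := fun x => F x • gG x with hfdef
  have hfd : Differentiable ℝ f := hF.smul hgGd
  have hfs : HasCompactSupport f := hgGsupp.smul_left (f := F)
  have htrace : ∀ x, LinearMap.trace ℝ (EuclideanSpace ℝ (Fin n)) (fderiv ℝ f x).toLinearMap =
      F x * LinearMap.trace ℝ (EuclideanSpace ℝ (Fin n)) (fderiv ℝ gG x).toLinearMap
        + B x (gF x) (gG x) := by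
    intro x
    have hdf : fderiv ℝ f x = F x • fderiv ℝ gG x + (fderiv ℝ F x).smulRight (gG x) :=
      fderiv_smul (hF x) (hgGd x)
    rw [hdf, trace_eq_sum_eucl, trace_eq_sum_eucl, hgFgrad x (gG x)]
    have hexp : ∑ i, fderiv ℝ F x (EuclideanSpace.single i 1) * gG x i = fderiv ℝ F x (gG x) := by
      have hsum : (∑ i, gG x i • EuclideanSpace.single i (1:ℝ)) = gG x := by
        have := (EuclideanSpace.basisFun (Fin n) ℝ).toBasis.sum_repr (gG x)
        simpa [EuclideanSpace.basisFun_apply, EuclideanSpace.basisFun_repr] using this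
      calc ∑ i, fderiv ℝ F x (EuclideanSpace.single i 1) * gG x i
          = ∑ i, fderiv ℝ F x (gG x i • EuclideanSpace.single i 1) := by
            simp [mul_comm]
        _ = fderiv ℝ F x (∑ i, gG x i • EuclideanSpace.single i 1) := by
            rw [map_sum]
        _ = fderiv ℝ F x (gG x) := by rw [hsum]
    rw [← hexp]
    simp only [ContinuousLinearMap.add_apply, ContinuousLinearMap.coe_smul',
      Pi.smul_apply, ContinuousLinearMap.smulRight_apply, PiLp.add_apply, PiLp.smul_apply,
      smul_eq_mul]
    rw [Finset.sum_add_distrib, Finset.mul_sum]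
  have hintf : Integrable (fun x =>
      LinearMap.trace ℝ (EuclideanSpace ℝ (Fin n)) (fderiv ℝ f x).toLinearMap) := by
    simp only [htrace]
    exact hint1.add hint2
  have h0 := eucl_div_zero f hfd hfs hintf
  simp only [htrace] at h0
  rw [integral_add hint1 hint2] at h0
  linarith
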